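/- For every τ ∈ ℂ and every x ∈ ℂ, the Hermite function satisfies the three-term recurrence relation H_{τ+1}(x) − 2x·H_τ(x) + 2τ·H_{τ−1}(x) = 0. -/

import Mathlib

open Complex MeasureTheory Filter Topology

/-- Pochhammer symbol `(a)_m = a (a+1) ⋯ (a+m-1)` for complex `a`. -/
noncomputable def cPoch (a : ℂ) (m : ℕ) : ℂ := ∏ k ∈ Finset.range m, (a + k)

/-- Confluent hypergeometric function `₁F₁(a, b, z) = Σ (a)_m / (b)_m · z^m / m!`. -/
noncomputable def oneF1 (a b z : ℂ) : ℂ :=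
  ∑' m : ℕ, (cPoch a m / cPoch b m) * z ^ m / (Nat.factorial m : ℂ)

/-- The Hermite function `H_τ` of complex degree `τ`. -/
noncomputable def hermiteFn (τ x : ℂ) : ℂ :=
  2 ^ τ * (Complex.Gamma (1 / 2) / Complex.Gamma ((1 - τ) / 2)) *
      oneF1 (-τ / 2) (1 / 2) (x ^ 2) +
    2 ^ τ * x * (Complex.Gamma (-(1 / 2)) / Complex.Gamma (-τ / 2)) *
      oneF1 ((1 - τ) / 2) (3 / 2) (x ^ 2)

/-- Moments of the generalized Hermite linear functional `𝒢_H(τ)`: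
`m_{2k}(τ) = (τ+1)_{2k} / (k! 2^{2k})` and `m_{2k+1}(τ) = 0`. -/
noncomputable def genHermiteMoment (τ : ℂ) (n : ℕ) : ℂ :=
  if n % 2 = 0 then cPoch (τ + 1) n / (((n / 2).factorial : ℂ) * 2 ^ n) else 0

noncomputable section

noncomputable def hterm (a b z : ℂ) (m : ℕ) : ℂ :=
  (cPoch a m / cPoch b m) * z ^ m / (Nat.factorial m : ℂ)

lemma oneF1_eq (a b z : ℂ) : oneF1 a b z = ∑' m, hterm a b z m := rfl

lemma cPoch_zero (a : ℂ) : cPoch a 0 = 1 := by simp [cPoch]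

lemma cPoch_succ (a : ℂ) (m : ℕ) : cPoch a (m+1) = cPoch a m * (a + m) :=
  Finset.prod_range_succ _ _

lemma cPoch_succ' (a : ℂ) (m : ℕ) : cPoch a (m+1) = a * cPoch (a+1) m := by
  rw [cPoch, Finset.prod_range_succ']
  simp only [Nat.cast_zero, add_zero, mul_comm]
  congr 1
  refine Finset.prod_congr rfl fun k _ => ?_
  push_cast; ring

lemma cPoch_mul_shift (b : ℂ) (m : ℕ) : b * cPoch (b+1) m = cPoch b m * (b + m) := by
  rw [← cPoch_succ', cPoch_succ]

lemma cPoch_half_threehalf (m : ℕ) :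
    cPoch (3/2 : ℂ) m = (1 + 2*m) * cPoch (1/2 : ℂ) m := by
  have h := cPoch_mul_shift (1/2 : ℂ) m
  have h32 : (1/2 : ℂ) + 1 = 3/2 := by norm_num
  rw [h32] at h
  field_simp at h ⊢
  linear_combination h

lemma cPoch_pos_ne_zero {b : ℝ} (hb : 0 < b) (m : ℕ) : cPoch (b : ℂ) m ≠ 0 := by
  rw [cPoch]
  refine Finset.prod_ne_zero_iff.mpr fun k _ => ?_
  intro h
  have h2 : b + (k:ℝ) = 0 := by simpa using congrArg Complex.re h
  have hpos : (0:ℝ) < b + k := by positivity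
  linarith


lemma cPoch_half_ne_zero (m : ℕ) : cPoch (1/2 : ℂ) m ≠ 0 := by
  have := cPoch_pos_ne_zero (b := 1/2) (by norm_num) m
  simpa using this

lemma cPoch_threehalf_ne_zero (m : ℕ) : cPoch (3/2 : ℂ) m ≠ 0 := by
  have := cPoch_pos_ne_zero (b := 3/2) (by norm_num) m
  simpa using this

lemma norm_cPoch_le (a b : ℂ) (C : ℝ) (hC : 0 ≤ C) (hb : ∀ k : ℕ, ‖a + k‖ ≤ C * ‖b + k‖) :
    ∀ m, ‖cPoch a m‖ ≤ C ^ m * ‖cPoch b m‖ := by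
  intro m
  induction m with
  | zero => simp [cPoch_zero]
  | succ m ih =>
    rw [cPoch_succ, cPoch_succ, norm_mul, norm_mul, pow_succ]
    calc ‖cPoch a m‖ * ‖a + m‖ ≤ (C ^ m * ‖cPoch b m‖) * (C * ‖b + m‖) := by
          apply mul_le_mul ih (hb m) (norm_nonneg _)
          positivity
      _ = C ^ m * C * (‖cPoch b m‖ * ‖b + m‖) := by ring

lemma summable_hterm (a b z : ℂ) (C : ℝ) (hC : 0 ≤ C)
    (hb : ∀ k : ℕ, ‖a + k‖ ≤ C * ‖b + k‖) : Summable (hterm a b z) := by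
  refine Summable.of_norm_bounded (g := fun m => (C * ‖z‖) ^ m / m.factorial)
    (Real.summable_pow_div_factorial (C * ‖z‖)) fun m => ?_
  have key := norm_cPoch_le a b C hC hb m
  have h1 : ‖hterm a b z m‖ = ‖cPoch a m‖ / ‖cPoch b m‖ * ‖z‖ ^ m / m.factorial := by
    rw [hterm, norm_div, norm_mul, norm_div, norm_pow, Complex.norm_natCast]
  rw [h1]
  rw [mul_pow]
  have hdiv : ‖cPoch a m‖ / ‖cPoch b m‖ ≤ C ^ m := by
    rcases eq_or_lt_of_le (norm_nonneg (cPoch b m)) with h | h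
    · rw [← h, div_zero]; positivity
    · rw [div_le_iff₀ h]; exact key
  gcongr


lemma summable_hterm_half (a z : ℂ) : Summable (hterm a (1/2) z) := by
  refine summable_hterm a _ z (2*‖a‖+1) (by positivity) fun k => ?_
  have h1 : ‖a + k‖ ≤ ‖a‖ + k := by
    calc ‖a + k‖ ≤ ‖a‖ + ‖(k:ℂ)‖ := norm_add_le _ _
      _ = ‖a‖ + k := by simp
  have h2 : ‖(1/2 : ℂ) + k‖ = 1/2 + k := by
    rw [show (1/2:ℂ) + k = ((1/2 + k : ℝ) : ℂ) by push_cast; ring, Complex.norm_real]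
    rw [Real.norm_eq_abs, abs_of_pos (by positivity)]
  rw [h2]
  nlinarith [norm_nonneg a, Nat.cast_nonneg (α := ℝ) k]

lemma summable_hterm_threehalf (a z : ℂ) : Summable (hterm a (3/2) z) := by
  refine summable_hterm a _ z (2*‖a‖+1) (by positivity) fun k => ?_
  have h1 : ‖a + k‖ ≤ ‖a‖ + k := by
    calc ‖a + k‖ ≤ ‖a‖ + ‖(k:ℂ)‖ := norm_add_le _ _
      _ = ‖a‖ + k := by simp
  have h2 : ‖(3/2 : ℂ) + k‖ = 3/2 + k := by
    rw [show (3/2:ℂ) + k = ((3/2 + k : ℝ) : ℂ) by push_cast; ring, Complex.norm_real]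
    rw [Real.norm_eq_abs, abs_of_pos (by positivity)]
  rw [h2]
  nlinarith [norm_nonneg a, Nat.cast_nonneg (α := ℝ) k]

lemma fact_ne_zero' (m : ℕ) : ((Nat.factorial m : ℕ) : ℂ) ≠ 0 := by
  exact_mod_cast Nat.cast_ne_zero.mpr (Nat.factorial_ne_zero m)

lemma seriesEven (a X : ℂ) :
    oneF1 (a-1) (1/2) X - oneF1 a (1/2) X + 2*X*oneF1 a (3/2) X = 0 := by
  have hs1 := summable_hterm_half (a-1) X
  have hs2 := summable_hterm_half a X
  have hs3 := summable_hterm_threehalf a X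
  have keyS : ∀ m, hterm (a-1) (1/2) X (m+1) - hterm a (1/2) X (m+1)
      = -(2*X) * hterm a (3/2) X m := by
    intro m
    have e1 : cPoch (a-1) (m+1) = (a-1) * cPoch a m := by
      rw [cPoch_succ', show a - 1 + 1 = a from by ring]
    have e2 : cPoch a (m+1) = cPoch a m * (a + m) := cPoch_succ a m
    have e3 : cPoch (1/2 : ℂ) (m+1) = (1/2) * cPoch (3/2 : ℂ) m := by
      rw [cPoch_succ', show (1/2 : ℂ) + 1 = 3/2 from by norm_num]
    have e4 : ((Nat.factorial (m+1) : ℕ) : ℂ) = (m+1) * (Nat.factorial m : ℕ) := by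
      push_cast [Nat.factorial_succ]; ring
    have hne1 := cPoch_threehalf_ne_zero m
    have hne2 := fact_ne_zero' m
    have hne3 : ((m : ℂ) + 1) ≠ 0 := by
      exact_mod_cast Nat.cast_add_one_ne_zero (R := ℂ) m
    simp only [hterm, e1, e2, e3, e4]
    field_simp
    ring
  let w : ℕ → ℂ := fun n => match n with
    | 0 => 0
    | (n+1) => -(2*X) * hterm a (3/2) X n
  have hw : (fun m => hterm (a-1) (1/2) X m - hterm a (1/2) X m) = w := by
    funext m
    cases m with
    | zero => simp [w, hterm, cPoch_zero]
    | succ n => exact keyS n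
  have hws : Summable w := hw ▸ (hs1.sub hs2)
  have hcalc : oneF1 (a-1) (1/2) X - oneF1 a (1/2) X = -(2*X) * oneF1 a (3/2) X := by
    calc oneF1 (a-1) (1/2) X - oneF1 a (1/2) X
        = ∑' m, (hterm (a-1) (1/2) X m - hterm a (1/2) X m) := (Summable.tsum_sub hs1 hs2).symm
      _ = ∑' m, w m := by rw [hw]
      _ = w 0 + ∑' m, w (m+1) := Summable.tsum_eq_zero_add hws
      _ = ∑' m, -(2*X) * hterm a (3/2) X m := by simp [w]
      _ = -(2*X) * oneF1 a (3/2) X := by rw [tsum_mul_left, oneF1_eq]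
  linear_combination hcalc

lemma seriesOdd (u X : ℂ) :
    (1-2*u) * oneF1 u (3/2) X + (2*u) * oneF1 (u+1) (3/2) X - oneF1 u (1/2) X = 0 := by
  have hs1 := summable_hterm_threehalf u X
  have hs2 := summable_hterm_threehalf (u+1) X
  have hs3 := summable_hterm_half u X
  have key : ∀ m, (1-2*u) * hterm u (3/2) X m + (2*u) * hterm (u+1) (3/2) X m
      - hterm u (1/2) X m = 0 := by
    intro m
    have e1 : cPoch (3/2 : ℂ) m = (1 + 2*m) * cPoch (1/2 : ℂ) m := cPoch_half_threehalf m
    have e2 : u * cPoch (u+1) m = cPoch u m * (u + m) := cPoch_mul_shift u m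
    have hne1 := cPoch_threehalf_ne_zero m
    have hne2 := cPoch_half_ne_zero m
    have hne3 := fact_ne_zero' m
    have hne4 : (1 + 2*(m:ℂ)) ≠ 0 := by
      intro h
      have := congrArg Complex.re h
      simp at this
      nlinarith [Nat.cast_nonneg (α := ℝ) m, this]
    simp only [hterm, e1]
    field_simp
    linear_combination 2 * X ^ m * e2
  have comb : (fun m => (1-2*u) * hterm u (3/2) X m + (2*u) * hterm (u+1) (3/2) X m
      - hterm u (1/2) X m) = fun _ => (0:ℂ) := funext key
  have : (1-2*u) * oneF1 u (3/2) X + (2*u) * oneF1 (u+1) (3/2) X - oneF1 u (1/2) X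
      = ∑' m, ((1-2*u) * hterm u (3/2) X m + (2*u) * hterm (u+1) (3/2) X m
        - hterm u (1/2) X m) := by
    rw [Summable.tsum_sub ((hs1.mul_left _).add (hs2.mul_left _)) hs3,
        Summable.tsum_add (hs1.mul_left _) (hs2.mul_left _), tsum_mul_left, tsum_mul_left,
        oneF1_eq, oneF1_eq, oneF1_eq]
  rw [this, comb, tsum_zero]

lemma inv_Gamma_rec (s : ℂ) : (Complex.Gamma s)⁻¹ = s * (Complex.Gamma (s+1))⁻¹ := by
  rcases eq_or_ne s 0 with h | h
  · simp [h, Complex.Gamma_zero]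
  · rw [Complex.Gamma_add_one s h, mul_inv, ← mul_assoc, mul_inv_cancel₀ h, one_mul]

lemma Gamma_neg_half : Complex.Gamma (-(1/2) : ℂ) = -2 * Complex.Gamma (1/2) := by
  have h := Complex.Gamma_add_one (-(1/2) : ℂ) (by norm_num)
  rw [show (-(1/2) : ℂ) + 1 = 1/2 from by norm_num] at h
  linear_combination (2 : ℂ) * h


end

theorem hermiteFn_three_term_recurrence (τ x : ℂ) :
    hermiteFn (τ + 1) x - 2 * x * hermiteFn τ x + 2 * τ * hermiteFn (τ - 1) x = 0 := by

  have h2 : (2:ℂ) ≠ 0 := two_ne_zero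
  have heven := seriesEven ((1-τ)/2) (x^2)
  have hodd := seriesOdd (-τ/2) (x^2)
  have hr : (Complex.Gamma (-τ/2))⁻¹ = (-τ/2) * (Complex.Gamma (-τ/2+1))⁻¹ :=
    inv_Gamma_rec _
  have hq : (Complex.Gamma ((1-τ)/2 - 1))⁻¹
      = ((1-τ)/2 - 1) * (Complex.Gamma ((1-τ)/2))⁻¹ := by
    have := inv_Gamma_rec ((1-τ)/2 - 1)
    rw [show (1-τ)/2 - 1 + 1 = (1-τ)/2 from by ring] at this
    exact this
  simp only [hermiteFn]
  rw [show (-(τ+1)/2 : ℂ) = (1-τ)/2 - 1 from by ring,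
      show ((1 - (τ+1))/2 : ℂ) = -τ/2 from by ring,
      show ((1 - (τ-1))/2 : ℂ) = -τ/2 + 1 from by ring,
      show (-(τ-1)/2 : ℂ) = (1-τ)/2 from by ring,
      Gamma_neg_half, Complex.cpow_add _ _ h2, Complex.cpow_sub _ _ h2,
      Complex.cpow_one]
  linear_combination
    (2*(2:ℂ)^τ * Complex.Gamma (1/2) * (Complex.Gamma (-τ/2))⁻¹) * heven
    + (2*(2:ℂ)^τ * Complex.Gamma (1/2) * x * (Complex.Gamma ((1-τ)/2))⁻¹) * hodd
    + (-4*(2:ℂ)^τ * Complex.Gamma (1/2) * x * oneF1 (-τ/2) (3/2) (x^2)) * hq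
    + (2*(2:ℂ)^τ * Complex.Gamma (1/2) * oneF1 ((1-τ)/2) (1/2) (x^2)) * hr
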